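/- (Decay of Chebyshev coefficients in the Bessel order.) Let k ≥ 1 and ℓ ≥ 0 be integers and let 0 ≤ a < b and r > 0 be reals. Then |c_{kℓ}(r)| ≤ 2 e^{e·b·r/2 − k}, where e is Euler's number. -/

import Mathlib

/-- The Bessel function of the first kind of nonnegative integer order `n`,
defined by its everywhere-convergent power series. -/
noncomputable def besselJNat (n : ℕ) (x : ℝ) : ℝ :=
  ∑' q : ℕ, (-1 : ℝ) ^ q * (x / 2) ^ (2 * q + n) /
    ((q.factorial : ℝ) * ((q + n).factorial : ℝ))

/-- The Bessel function of the first kind of integer order. -/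
noncomputable def besselJ (n : ℤ) (x : ℝ) : ℝ :=
  if 0 ≤ n then besselJNat n.toNat x else (-1 : ℝ) ^ n * besselJNat (-n).toNat x

/-- The Chebyshev coefficient `c_{kℓ}(r)` of the Bessel function `J_k(ρ r)` for
`ρ ∈ [a, b]`, in its integral form. -/
noncomputable def chebCoef (a b r : ℝ) (k : ℤ) (ℓ : ℕ) : ℝ :=
  2 / Real.pi * ∫ τ in (0 : ℝ)..Real.pi,
    besselJ k ((b - a) * r / 2 * Real.cos τ + (b + a) * r / 2) * Real.cos (ℓ * τ)


open MeasureTheory intervalIntegral Set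

noncomputable def trigA (q k : ℕ) : ℝ :=
  ∫ θ in (0:ℝ)..Real.pi, Real.cos θ ^ (2*q) * Real.sin θ ^ (2*k)

lemma trigA_cont (q k : ℕ) :
    Continuous fun θ : ℝ => Real.cos θ ^ (2*q) * Real.sin θ ^ (2*k) := by
  fun_prop

lemma trigA_pos (k : ℕ) : 0 < trigA 0 k := by
  apply intervalIntegral_pos_of_pos_on
  · exact ((trigA_cont 0 k).intervalIntegrable _ _)
  · intro x hx
    have h1 : 0 < Real.sin x := Real.sin_pos_of_pos_of_lt_pi hx.1 hx.2
    have h2 : (0:ℝ) < Real.sin x ^ (2*k) := by positivity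
    simpa using h2
  · exact Real.pi_pos

lemma trigA_rec (q k : ℕ) :
    (2*(q:ℝ) + 2*k + 2) * trigA (q+1) k = (2*q+1) * trigA q k := by
  have hu : ∀ θ ∈ uIcc (0:ℝ) Real.pi,
      HasDerivAt (fun θ : ℝ => Real.cos θ ^ (2*q+1))
        (((2*q+1 : ℕ) : ℝ) * Real.cos θ ^ (2*q) * (-Real.sin θ)) θ := by
    intro θ _
    have := (Real.hasDerivAt_cos θ).fun_pow (2*q+1)
    simpa using this
  have hv : ∀ θ ∈ uIcc (0:ℝ) Real.pi,
      HasDerivAt (fun θ : ℝ => Real.sin θ ^ (2*k+1))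
        (((2*k+1 : ℕ) : ℝ) * Real.sin θ ^ (2*k) * Real.cos θ) θ := by
    intro θ _
    have := (Real.hasDerivAt_sin θ).fun_pow (2*k+1)
    simpa using this
  have hu' : IntervalIntegrable
      (fun θ : ℝ => ((2*q+1 : ℕ) : ℝ) * Real.cos θ ^ (2*q) * (-Real.sin θ))
      volume 0 Real.pi := by
    apply Continuous.intervalIntegrable; fun_prop
  have hv' : IntervalIntegrable
      (fun θ : ℝ => ((2*k+1 : ℕ) : ℝ) * Real.sin θ ^ (2*k) * Real.cos θ)
      volume 0 Real.pi := by
    apply Continuous.intervalIntegrable; fun_prop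
  have ibp := integral_mul_deriv_eq_deriv_mul hu hv hu' hv'
  -- LHS of ibp equals (2k+1) * trigA (q+1) k
  have hL : (∫ θ in (0:ℝ)..Real.pi,
      Real.cos θ ^ (2*q+1) * (((2*k+1 : ℕ) : ℝ) * Real.sin θ ^ (2*k) * Real.cos θ))
      = ((2*k+1 : ℕ) : ℝ) * trigA (q+1) k := by
    rw [trigA, ← intervalIntegral.integral_const_mul]
    apply intervalIntegral.integral_congr
    intro θ _; ring
  have hR : (∫ θ in (0:ℝ)..Real.pi,
      (((2*q+1 : ℕ) : ℝ) * Real.cos θ ^ (2*q) * (-Real.sin θ)) * Real.sin θ ^ (2*k+1))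
      = ((2*q+1 : ℕ) : ℝ) * (trigA (q+1) k - trigA q k) := by
    have hsub : (∫ θ in (0:ℝ)..Real.pi,
        (Real.cos θ ^ (2*(q+1)) * Real.sin θ ^ (2*k)
          - Real.cos θ ^ (2*q) * Real.sin θ ^ (2*k)))
        = trigA (q+1) k - trigA q k := by
      rw [trigA, trigA]
      exact intervalIntegral.integral_sub ((trigA_cont (q+1) k).intervalIntegrable _ _)
        ((trigA_cont q k).intervalIntegrable _ _)
    rw [← hsub, ← intervalIntegral.integral_const_mul]
    apply intervalIntegral.integral_congr
    intro θ _
    have hs : Real.sin θ ^ 2 = 1 - Real.cos θ ^ 2 := Real.sin_sq θ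
    have : Real.sin θ ^ (2*k+1+1) = Real.sin θ ^ (2*k) * (1 - Real.cos θ ^ 2) := by
      rw [← hs]; ring
    calc ((2*q+1 : ℕ) : ℝ) * Real.cos θ ^ (2*q) * (-Real.sin θ) * Real.sin θ ^ (2*k+1)
        = -(((2*q+1 : ℕ) : ℝ) * (Real.cos θ ^ (2*q) * Real.sin θ ^ (2*k+1+1))) := by ring
      _ = ((2*q+1 : ℕ) : ℝ) * (Real.cos θ ^ (2*(q+1)) * Real.sin θ ^ (2*k)
            - Real.cos θ ^ (2*q) * Real.sin θ ^ (2*k)) := by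
          rw [this]; ring
  rw [hL, hR] at ibp
  simp only [Real.sin_pi, Real.sin_zero] at ibp
  norm_num at ibp
  push_cast at ibp ⊢
  linarith [ibp]

lemma trigA_closed (q k : ℕ) :
    ((4:ℝ)^q * q.factorial * (q+k).factorial) * trigA q k
      = ((2*q).factorial * k.factorial : ℕ) * trigA 0 k := by
  induction q with
  | zero => push_cast; norm_num
  | succ q ih =>
    have hrec := trigA_rec q k
    have e1 : ((4:ℝ)^(q+1) * (q+1).factorial * (q+1+k).factorial)
        = ((4:ℝ)^q * q.factorial * (q+k).factorial) * (2*(q:ℝ)+2) * (2*(q:ℝ)+2*k+2) := by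
      rw [Nat.factorial_succ]
      have : q + 1 + k = (q + k) + 1 := by ring
      rw [this, Nat.factorial_succ]
      push_cast; ring
    have e2 : (((2*(q+1)).factorial : ℕ) : ℝ)
        = ((2*q).factorial : ℕ) * (2*(q:ℝ)+1) * (2*(q:ℝ)+2) := by
      have : 2*(q+1) = (2*q+1)+1 := by ring
      rw [this, Nat.factorial_succ, Nat.factorial_succ]
      push_cast; ring
    rw [e1]
    push_cast
    push_cast at ih e2
    calc (4:ℝ)^q * q.factorial * (q+k).factorial * (2*(q:ℝ)+2) * (2*(q:ℝ)+2*k+2) * trigA (q+1) k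
        = (2*(q:ℝ)+2) * ((4:ℝ)^q * q.factorial * (q+k).factorial)
            * ((2*(q:ℝ)+2*k+2) * trigA (q+1) k) := by ring
      _ = (2*(q:ℝ)+2) * ((4:ℝ)^q * q.factorial * (q+k).factorial) * ((2*q+1) * trigA q k) := by
          rw [hrec]
      _ = (2*(q:ℝ)+2) * (2*(q:ℝ)+1) * (((4:ℝ)^q * q.factorial * (q+k).factorial) * trigA q k) := by
          ring
      _ = (2*(q:ℝ)+2) * (2*(q:ℝ)+1) * (((2*q).factorial * k.factorial : ℝ) * trigA 0 k) := by
          rw [ih]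
      _ = ((2*(q+1)).factorial * k.factorial : ℝ) * trigA 0 k := by rw [e2]; push_cast; ring

lemma besselJ_poisson (k : ℕ) (x : ℝ) :
    (k.factorial : ℝ) * trigA 0 k * besselJNat k x
      = (x/2)^k * ∫ θ in (0:ℝ)..Real.pi,
          Real.cos (x * Real.cos θ) * Real.sin θ ^ (2*k) := by
  set F : ℕ → ℝ → ℝ := fun q θ =>
    ((-1:ℝ))^q * (x * Real.cos θ)^(2*q) / ((2*q).factorial : ℝ) * Real.sin θ^(2*k) with hF
  have hFcont : ∀ q, Continuous (F q) := by intro q; fun_prop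
  have step1 : ∀ θ : ℝ, Real.cos (x * Real.cos θ) * Real.sin θ^(2*k) = ∑' q, F q θ := by
    intro θ
    rw [Real.cos_eq_tsum (x * Real.cos θ), ← tsum_mul_right]
  have hmaj : Summable (fun q : ℕ => |x|^(2*q) / ((2*q).factorial : ℝ) * Real.pi) := by
    apply Summable.mul_right
    have h1 := Real.summable_pow_div_factorial |x|
    have h2 : Function.Injective (fun q : ℕ => 2*q) := fun a b h => by
      simp only [] at h; omega
    exact h1.comp_injective h2
  have hbound : ∀ (q : ℕ) (θ : ℝ), θ ∈ Ioc (0:ℝ) Real.pi →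
      ‖F q θ‖ ≤ |x|^(2*q) / ((2*q).factorial : ℝ) := by
    intro q θ _
    have h2 : |(x * Real.cos θ)^(2*q)| ≤ |x|^(2*q) := by
      rw [abs_pow, abs_mul]
      apply pow_le_pow_left₀ (by positivity)
      nlinarith [Real.abs_cos_le_one θ, abs_nonneg x, abs_nonneg (Real.cos θ)]
    have h3 : |Real.sin θ ^ (2*k)| ≤ 1 := by
      rw [abs_pow]
      exact pow_le_one₀ (abs_nonneg _) (Real.abs_sin_le_one θ)
    have h5 : ‖F q θ‖ = |(x * Real.cos θ)^(2*q)| / ((2*q).factorial : ℝ)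
        * |Real.sin θ ^ (2*k)| := by
      rw [hF]
      simp only [Real.norm_eq_abs, abs_mul, abs_div, abs_pow, abs_neg, abs_one, one_pow,
        one_mul, Nat.abs_cast]
    rw [h5]
    calc |(x * Real.cos θ)^(2*q)| / ((2*q).factorial : ℝ) * |Real.sin θ ^ (2*k)|
        ≤ |x|^(2*q) / ((2*q).factorial : ℝ) * 1 := by
          gcongr
      _ = |x|^(2*q) / ((2*q).factorial : ℝ) := by ring
  have hswap : ∫ θ in Ioc (0:ℝ) Real.pi, (∑' q, F q θ)
      = ∑' q, ∫ θ in Ioc (0:ℝ) Real.pi, F q θ := by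
    refine (integral_tsum_of_summable_integral_norm (fun q => (hFcont q).integrableOn_Ioc) ?_).symm
    apply Summable.of_nonneg_of_le
      (fun q => integral_nonneg (fun θ => norm_nonneg _)) _ hmaj
    intro q
    have hle : ∫ θ in Ioc (0:ℝ) Real.pi, ‖F q θ‖
        ≤ ∫ _θ in Ioc (0:ℝ) Real.pi, |x|^(2*q) / ((2*q).factorial : ℝ) :=
      setIntegral_mono_on ((hFcont q).norm.integrableOn_Ioc)
        (integrableOn_const measure_Ioc_lt_top.ne) measurableSet_Ioc (hbound q)
    calc ∫ θ in Ioc (0:ℝ) Real.pi, ‖F q θ‖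
        ≤ ∫ _θ in Ioc (0:ℝ) Real.pi, |x|^(2*q) / ((2*q).factorial : ℝ) := hle
      _ = |x|^(2*q) / ((2*q).factorial : ℝ) * Real.pi := by
          rw [setIntegral_const]
          simp [Real.volume_Ioc, ENNReal.toReal_ofReal Real.pi_pos.le, max_eq_left Real.pi_pos.le, mul_comm]
  have hIq : ∀ q : ℕ, (∫ θ in Ioc (0:ℝ) Real.pi, F q θ)
      = ((-1:ℝ))^q * x^(2*q) / ((2*q).factorial : ℝ) * trigA q k := by
    intro q
    rw [trigA, intervalIntegral.integral_of_le Real.pi_pos.le, ← MeasureTheory.integral_const_mul]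
    congr 1
    funext θ
    rw [hF]
    simp only []
    rw [mul_pow x (Real.cos θ) (2*q)]
    ring
  have hrhs : (∫ θ in (0:ℝ)..Real.pi, Real.cos (x*Real.cos θ) * Real.sin θ^(2*k))
      = ∑' q : ℕ, ((-1:ℝ))^q * x^(2*q) / ((2*q).factorial : ℝ) * trigA q k := by
    rw [intervalIntegral.integral_of_le Real.pi_pos.le]
    calc (∫ θ in Ioc (0:ℝ) Real.pi, Real.cos (x*Real.cos θ) * Real.sin θ^(2*k))
        = ∫ θ in Ioc (0:ℝ) Real.pi, ∑' q, F q θ := by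
          congr 1; funext θ; exact step1 θ
      _ = ∑' q, ∫ θ in Ioc (0:ℝ) Real.pi, F q θ := hswap
      _ = ∑' q : ℕ, ((-1:ℝ))^q * x^(2*q) / ((2*q).factorial : ℝ) * trigA q k :=
          tsum_congr hIq
  rw [hrhs, ← tsum_mul_left, besselJNat, ← tsum_mul_left]
  apply tsum_congr
  intro q
  have hAq : trigA q k = ((2*q).factorial : ℝ) * (k.factorial : ℝ) * trigA 0 k
      / ((4:ℝ)^q * q.factorial * (q+k).factorial) := by
    rw [eq_div_iff (by positivity)]
    have := trigA_closed q k
    push_cast at this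
    linarith [this]
  rw [hAq]
  have h4 : (4:ℝ)^q = 2^(2*q) := by rw [pow_mul]; norm_num
  have hx2 : (x/2)^(2*q+k) = x^(2*q) * (x/2)^k / 4^q := by
    rw [pow_add, div_pow, h4]; ring
  rw [hx2]
  have hq : ((q.factorial : ℝ)) ≠ 0 := by positivity
  have hqk : (((q+k).factorial : ℝ)) ≠ 0 := by positivity
  have h2q : (((2*q).factorial : ℝ)) ≠ 0 := by positivity
  have h4q : ((4:ℝ)^q) ≠ 0 := by positivity
  field_simp

lemma besselJNat_le (k : ℕ) {x : ℝ} (hx : 0 ≤ x) :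
    |besselJNat k x| ≤ (x/2)^k / k.factorial := by
  have hW := trigA_pos k
  have hp := besselJ_poisson k x
  set I := ∫ θ in (0:ℝ)..Real.pi, Real.cos (x * Real.cos θ) * Real.sin θ ^ (2*k) with hI
  have hcont : Continuous fun θ : ℝ => Real.cos (x * Real.cos θ) * Real.sin θ ^ (2*k) := by
    fun_prop
  have hint : |I| ≤ trigA 0 k := by
    rw [hI]
    calc |∫ θ in (0:ℝ)..Real.pi, Real.cos (x * Real.cos θ) * Real.sin θ ^ (2*k)|
        ≤ ∫ θ in (0:ℝ)..Real.pi, |Real.cos (x * Real.cos θ) * Real.sin θ ^ (2*k)| := by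
          exact intervalIntegral.abs_integral_le_integral_abs Real.pi_pos.le
      _ ≤ ∫ θ in (0:ℝ)..Real.pi, Real.cos θ ^ (2*0) * Real.sin θ ^ (2*k) := by
          apply intervalIntegral.integral_mono_on Real.pi_pos.le
            (hcont.abs.intervalIntegrable _ _) ((trigA_cont 0 k).intervalIntegrable _ _)
          intro θ _
          have h1 : (0:ℝ) ≤ Real.sin θ ^ (2*k) := by
            rw [pow_mul]; positivity
          have h2 : |Real.cos (x * Real.cos θ)| ≤ 1 := Real.abs_cos_le_one _
          rw [abs_mul, abs_of_nonneg h1]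
          calc |Real.cos (x * Real.cos θ)| * Real.sin θ ^ (2*k)
              ≤ 1 * Real.sin θ ^ (2*k) := by gcongr
            _ = Real.cos θ ^ (2*0) * Real.sin θ ^ (2*k) := by norm_num
      _ = trigA 0 k := rfl
  have hfac : (0:ℝ) < (k.factorial : ℝ) := by positivity
  have habs : (k.factorial : ℝ) * trigA 0 k * |besselJNat k x| = (x/2)^k * |I| := by
    have h0 : (0:ℝ) ≤ (k.factorial : ℝ) * trigA 0 k := by positivity
    have hx2 : (0:ℝ) ≤ (x/2)^k := by positivity
    rw [← abs_of_nonneg h0, ← abs_mul, hp, abs_mul, abs_of_nonneg hx2]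
  have h1 : (k.factorial : ℝ) * trigA 0 k * |besselJNat k x| ≤ (x/2)^k * trigA 0 k := by
    rw [habs]
    exact mul_le_mul_of_nonneg_left hint (by positivity)
  rw [le_div_iff₀ hfac]
  nlinarith [hW, h1]

lemma pow_div_fact_le_exp (k : ℕ) (hk : 1 ≤ k) {y : ℝ} (hy : 0 ≤ y) :
    y^k / k.factorial ≤ Real.exp (Real.exp 1 * y - k) := by
  have hk0 : (0:ℝ) < k := by exact_mod_cast hk
  have hfac : (0:ℝ) < (k.factorial : ℝ) := by positivity
  have hfact : (k:ℝ)^k ≤ Real.exp k * k.factorial := by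
    have h := Real.pow_div_factorial_le_exp (x := (k:ℝ)) hk0.le k
    rw [div_le_iff₀ hfac] at h
    linarith
  set t := Real.exp 1 * y / k with ht
  have ht0 : 0 ≤ t := by positivity
  have h1 : t ≤ Real.exp (t - 1) := by
    have := Real.add_one_le_exp (t - 1); linarith
  have h2 : t^k ≤ Real.exp (t - 1)^k := pow_le_pow_left₀ ht0 h1 k
  have h3 : Real.exp (t - 1)^k = Real.exp (Real.exp 1 * y - k) := by
    rw [← Real.exp_nat_mul]
    congr 1
    rw [ht]
    field_simp
  have h4 : y^k / k.factorial ≤ t^k := by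
    have htk : t^k = Real.exp k * y^k / (k:ℝ)^k := by
      rw [ht, div_pow, mul_pow, ← Real.exp_one_pow]
    rw [htk, div_le_div_iff₀ hfac (by positivity)]
    have hyk : (0:ℝ) ≤ y^k := by positivity
    nlinarith [hfact, hyk, pow_nonneg hy k]
  exact h4.trans (h2.trans_eq h3)

theorem stmt12 (k : ℕ) (hk : 1 ≤ k) (ℓ : ℕ) (a b r : ℝ) (ha : 0 ≤ a) (hab : a < b)
    (hr : 0 < r) :
    |chebCoef a b r (k : ℤ) ℓ| ≤ 2 * Real.exp (Real.exp 1 * b * r / 2 - k) := by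
  set E := Real.exp (Real.exp 1 * b * r / 2 - k) with hE
  have hb : 0 < b := lt_of_le_of_lt ha hab
  have hbr : (0:ℝ) ≤ b * r / 2 := by positivity
  have hEb : ((b*r/2)^k / k.factorial : ℝ) ≤ E := by
    have h := pow_div_fact_le_exp k hk hbr
    have : Real.exp 1 * (b*r/2) = Real.exp 1 * b * r / 2 := by ring
    rw [this] at h
    exact h
  have hpoint : ∀ τ ∈ Set.uIoc (0:ℝ) Real.pi,
      ‖besselJ (k:ℤ) ((b - a) * r / 2 * Real.cos τ + (b + a) * r / 2)
        * Real.cos (ℓ * τ)‖ ≤ E := by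
    intro τ _
    set x := (b - a) * r / 2 * Real.cos τ + (b + a) * r / 2 with hxdef
    have hc1 := Real.neg_one_le_cos τ
    have hc2 := Real.cos_le_one τ
    have hx0 : 0 ≤ x := by
      rw [hxdef]
      nlinarith [mul_nonneg (mul_nonneg (sub_nonneg.mpr hab.le) hr.le)
        (by linarith : (0:ℝ) ≤ Real.cos τ + 1), mul_nonneg ha hr.le]
    have hxbr : x ≤ b * r := by
      rw [hxdef]
      nlinarith [mul_nonneg (mul_nonneg (sub_nonneg.mpr hab.le) hr.le)
        (by linarith : (0:ℝ) ≤ 1 - Real.cos τ), mul_nonneg ha hr.le]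
    have hJ : besselJ (k:ℤ) x = besselJNat k x := by
      rw [besselJ, if_pos (by positivity)]
      norm_num
    rw [Real.norm_eq_abs, abs_mul, hJ]
    calc |besselJNat k x| * |Real.cos (ℓ * τ)|
        ≤ ((x/2)^k / k.factorial) * 1 := by
          apply mul_le_mul (besselJNat_le k hx0) (Real.abs_cos_le_one _)
            (abs_nonneg _) (by positivity)
      _ = (x/2)^k / k.factorial := mul_one _
      _ ≤ (b*r/2)^k / k.factorial := by
          gcongr
      _ ≤ E := hEb
  have hint := intervalIntegral.norm_integral_le_of_norm_le_const hpoint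
  rw [sub_zero, abs_of_nonneg Real.pi_pos.le] at hint
  rw [chebCoef, abs_mul, abs_of_nonneg (by positivity : (0:ℝ) ≤ 2 / Real.pi)]
  calc 2 / Real.pi * |∫ τ in (0:ℝ)..Real.pi,
        besselJ (k:ℤ) ((b - a) * r / 2 * Real.cos τ + (b + a) * r / 2) * Real.cos (ℓ * τ)|
      ≤ 2 / Real.pi * (E * Real.pi) := by
        apply mul_le_mul_of_nonneg_left _ (by positivity)
        exact hint
    _ = 2 * E := by
        field_simp
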